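/- For every permutation π of {1,…,n}, the number of permutations π' of {1,…,n} with the same set of descending runs as π (i.e., R(π') = R(π)) equals the number of permutations σ of {1,…,n} that agree with χ_e(π) on {1,…,n}∖RT and satisfy σ(i) ≤ i for every i in RT, where RT is the set of run tops of π. -/

import Mathlib

open Finset
open scoped Classical

variable {n : ℕ}

/-- `π` has a descent at (0-based) position `k`. -/
def IsDesc (π : Equiv.Perm (Fin n)) (k : ℕ) : Prop :=
  ∃ hk : k + 1 < n, π ⟨k + 1, hk⟩ < π ⟨k, Nat.lt_of_succ_lt hk⟩

/-- Positions `i ≤ j` lie in the same descending run of `π`: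
every step between them is a descent. -/
def SameRunLe (π : Equiv.Perm (Fin n)) (i j : Fin n) : Prop :=
  i ≤ j ∧ ∀ k : ℕ, i.val ≤ k → k < j.val → IsDesc π k

/-- The first position of the descending run containing position `p`. -/
noncomputable def runStartPos (π : Equiv.Perm (Fin n)) (p : Fin n) : Fin n :=
  (Finset.univ.filter fun a => SameRunLe π a p).min'
    ⟨p, Finset.mem_filter.mpr ⟨Finset.mem_univ p,
      le_refl p, fun k hk hk' => absurd hk' (Nat.not_lt.mpr hk)⟩⟩

/-- The last position of the descending run containing position `p`. -/
noncomputable def runEndPos (π : Equiv.Perm (Fin n)) (p : Fin n) : Fin n :=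
  (Finset.univ.filter fun b => SameRunLe π p b).max'
    ⟨p, Finset.mem_filter.mpr ⟨Finset.mem_univ p,
      le_refl p, fun k hk hk' => absurd hk' (Nat.not_lt.mpr hk)⟩⟩

/-- The run top (largest value) of the descending run of `π` containing the value `v`. -/
noncomputable def runTopVal (π : Equiv.Perm (Fin n)) (v : Fin n) : Fin n :=
  π (runStartPos π (π.symm v))

/-- The run bottom (smallest value) of the descending run of `π` containing the value `v`. -/
noncomputable def runBotVal (π : Equiv.Perm (Fin n)) (v : Fin n) : Fin n :=
  π (runEndPos π (π.symm v))

/-- The set of run tops of `π`. -/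
noncomputable def RT (π : Equiv.Perm (Fin n)) : Finset (Fin n) :=
  Finset.univ.filter fun v => runTopVal π v = v

/-- The set of run bottoms of `π`. -/
noncomputable def RB (π : Equiv.Perm (Fin n)) : Finset (Fin n) :=
  Finset.univ.filter fun v => runBotVal π v = v

/-- The descending run of `π` containing the value `v`, as a set of values. -/
noncomputable def runOf (π : Equiv.Perm (Fin n)) (v : Fin n) : Finset (Fin n) :=
  Finset.univ.filter fun w => runStartPos π (π.symm w) = runStartPos π (π.symm v)

/-- The set of descending runs of `π`, each run regarded as a set of values. -/
noncomputable def runsSet (π : Equiv.Perm (Fin n)) : Finset (Finset (Fin n)) :=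
  Finset.univ.image (runOf π)

/-- The set `31∗2(π)`: pairs `(i,j)` with `i+1 < j`, `π i > π j > π (i+1)`, and the run
bottom of the run containing `π i` (and `π (i+1)`) smaller than the run bottom of
the run containing `π j`. -/
noncomputable def Pat31s2 (π : Equiv.Perm (Fin n)) : Finset (Fin n × Fin n) :=
  Finset.univ.filter fun p => ∃ h : p.1.val + 1 < n,
    p.1.val + 1 < p.2.val ∧ π p.2 < π p.1 ∧ π ⟨p.1.val + 1, h⟩ < π p.2 ∧
    runBotVal π (π p.1) < runBotVal π (π p.2)

/-- The multiset of descent views of `π`. -/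
noncomputable def dvM (π : Equiv.Perm (Fin n)) : Multiset (Fin n) :=
  (Pat31s2 π).val.map fun p => π p.2

/-- Invisible inversions of `σ`: pairs `(i,j)` with `i < j` and `σ i > σ j > i`. -/
def invisibleInversions (σ : Equiv.Perm (Fin n)) : Finset (Fin n × Fin n) :=
  Finset.univ.filter fun p => p.1 < p.2 ∧ σ p.2 < σ p.1 ∧ p.1 < σ p.2

/-- The multiset of invisible inversion bottoms of `σ`. -/
def invInvBottoms (σ : Equiv.Perm (Fin n)) : Multiset (Fin n) :=
  (invisibleInversions σ).val.map fun p => σ p.2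

/-- The set of positions of weak deficiencies of `σ`. -/
def weakDefPos (σ : Equiv.Perm (Fin n)) : Finset (Fin n) :=
  Finset.univ.filter fun i => σ i ≤ i

/-- The set of values of weak deficiencies of `σ`. -/
def weakDefVals (σ : Equiv.Perm (Fin n)) : Finset (Fin n) :=
  (weakDefPos σ).image σ

/-- Global ascents of `π`, as 1-based indices `m ∈ {1,…,n}`: `π` restricted to the
first `m` positions is a permutation of the smallest `m` values. -/
def globalAscents (π : Equiv.Perm (Fin n)) : Finset ℕ :=
  (Finset.Icc 1 n).filter fun m => ∀ i : Fin n, i.val < m → (π i).val < m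

/-- The set of left-to-right maxima (as values) of `π`. -/
def lrMax (π : Equiv.Perm (Fin n)) : Finset (Fin n) :=
  Finset.univ.filter fun v => ∀ i : Fin n, i < π.symm v → π i < v

/-- The set of maximal elements of the cycles of `σ`. -/
noncomputable def cycleMaxes (σ : Equiv.Perm (Fin n)) : Finset (Fin n) :=
  Finset.univ.filter fun v => ∀ w : Fin n, σ.SameCycle v w → w ≤ v

/-- The one-line notation of `π` (0-based values). -/
def oneLine (π : Equiv.Perm (Fin n)) : List ℕ :=
  (List.finRange n).map fun i => (π i : ℕ)

/-- Helper for splitting a list into maximal ascending runs. -/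
def addRun (x : ℕ) : List (List ℕ) → List (List ℕ)
  | [] => [[x]]
  | [] :: rest => [x] :: rest
  | (y :: r) :: rest =>
      if x < y then (x :: y :: r) :: rest else [x] :: (y :: r) :: rest

/-- Split a list into its maximal ascending runs. -/
def splitAscRuns (l : List ℕ) : List (List ℕ) := l.foldr addRun []

/-- Sort the ascending runs of `l` in increasing order of their minimal (= first)
elements and concatenate. -/
def runsortL (l : List ℕ) : List ℕ :=
  ((splitAscRuns l).mergeSort fun r s => decide (r.headI ≤ s.headI)).flatten

/-- The number of occurrences of the vincular pattern `13-2` in the word `l`: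
pairs `(i,j)` with `i < j` and `l i < l j < l (i+1)`. -/
def occ132 (l : List ℕ) : ℕ :=
  ((Finset.range l.length ×ˢ Finset.range l.length).filter fun p =>
    p.1 < p.2 ∧ l.getD p.1 0 < l.getD p.2 0 ∧ l.getD p.2 0 < l.getD (p.1 + 1) 0).card

/-- The multiset of inversion bottoms of a bijection from `{1,…,n}∖RT` to `{1,…,n}∖RB`. -/
noncomputable def invBottomsE (π : Equiv.Perm (Fin n))
    (f : {x : Fin n // x ∉ RT π} ≃ {x : Fin n // x ∉ RB π}) : Multiset (Fin n) :=
  ((Finset.univ :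
      Finset ({x : Fin n // x ∉ RT π} × {x : Fin n // x ∉ RT π})).filter fun p =>
    (p.1 : Fin n) < (p.2 : Fin n) ∧ (f p.2 : Fin n) < (f p.1 : Fin n)).val.map
    fun p => (f p.2 : Fin n)

/-- The multiset of descent views of `π` which are not run bottoms. -/
noncomputable def dvNotRB (π : Equiv.Perm (Fin n)) : Multiset (Fin n) :=
  (dvM π).filter fun v => v ∉ RB π

/-- `f` is the bijection `χ_e(π)`: its multiset of inversion bottoms is the multiset of
descent views of `π` which are not run bottoms. -/
def IsChiE (π : Equiv.Perm (Fin n))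
    (f : {x : Fin n // x ∉ RT π} ≃ {x : Fin n // x ∉ RB π}) : Prop :=
  invBottomsE π f = dvNotRB π

/-- The graph of the partial bijection `f`. -/
noncomputable def chiEGraph (π : Equiv.Perm (Fin n))
    (f : {x : Fin n // x ∉ RT π} ≃ {x : Fin n // x ∉ RB π}) : Finset (Fin n × Fin n) :=
  Finset.univ.image fun x : {x : Fin n // x ∉ RT π} => ((x : Fin n), (f x : Fin n))

/-- The number of cycles (orbits) of `σ`. -/
noncomputable def numCycles (σ : Equiv.Perm (Fin n)) : ℕ :=
  σ.cycleType.card + (Finset.univ.filter fun v => σ v = v).card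

namespace Stmt11

variable {n : ℕ} {π : Equiv.Perm (Fin n)}

lemma sameRunLe_refl (π : Equiv.Perm (Fin n)) (p : Fin n) : SameRunLe π p p :=
  ⟨le_refl p, fun k hk hk' => absurd hk' (Nat.not_lt.mpr hk)⟩

lemma sameRunLe_trans {a b c : Fin n} (h1 : SameRunLe π a b) (h2 : SameRunLe π b c) :
    SameRunLe π a c := by
  refine ⟨h1.1.trans h2.1, fun k hk hk' => ?_⟩
  rcases lt_or_ge k b.val with h | h
  · exact h1.2 k hk h
  · exact h2.2 k h hk'

lemma sameRunLe_split {a b c : Fin n} (h : SameRunLe π a c) (h1 : a ≤ b) (h2 : b ≤ c) :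
    SameRunLe π a b ∧ SameRunLe π b c := by
  refine ⟨⟨h1, fun k hk hk' => h.2 k hk (hk'.trans_le h2)⟩,
    ⟨h2, fun k hk hk' => h.2 k (le_trans h1 hk) hk'⟩⟩

lemma rsp_srl (p : Fin n) : SameRunLe π (runStartPos π p) p := by
  have := Finset.min'_mem (Finset.univ.filter fun a => SameRunLe π a p)
    ⟨p, Finset.mem_filter.mpr ⟨Finset.mem_univ p, sameRunLe_refl π p⟩⟩
  exact (Finset.mem_filter.mp this).2

lemma rsp_le (p : Fin n) : runStartPos π p ≤ p := (rsp_srl p).1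

lemma rsp_min {a p : Fin n} (h : SameRunLe π a p) : runStartPos π p ≤ a :=
  Finset.min'_le (Finset.univ.filter fun b => SameRunLe π b p) a
    (Finset.mem_filter.mpr ⟨Finset.mem_univ a, h⟩)

lemma rep_srl (p : Fin n) : SameRunLe π p (runEndPos π p) := by
  have := Finset.max'_mem (Finset.univ.filter fun b => SameRunLe π p b)
    ⟨p, Finset.mem_filter.mpr ⟨Finset.mem_univ p, sameRunLe_refl π p⟩⟩
  exact (Finset.mem_filter.mp this).2

lemma le_rep (p : Fin n) : p ≤ runEndPos π p := (rep_srl p).1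

lemma rep_max {a p : Fin n} (h : SameRunLe π p a) : a ≤ runEndPos π p :=
  Finset.le_max' (Finset.univ.filter fun b => SameRunLe π p b) a
    (Finset.mem_filter.mpr ⟨Finset.mem_univ a, h⟩)

lemma rsp_rep_srl (p : Fin n) : SameRunLe π (runStartPos π p) (runEndPos π p) :=
  sameRunLe_trans (rsp_srl p) (rep_srl p)

lemma rsp_eq_of_mem {p q : Fin n} (h1 : runStartPos π p ≤ q) (h2 : q ≤ runEndPos π p) :
    runStartPos π q = runStartPos π p := by
  have hq := (sameRunLe_split (rsp_rep_srl p) h1 h2).1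
  have hle : runStartPos π q ≤ runStartPos π p := rsp_min hq
  refine le_antisymm hle ?_
  rcases le_or_gt q p with h | h
  · exact rsp_min (sameRunLe_trans (rsp_srl q)
      (sameRunLe_split (rsp_srl p) h1 h).2)
  · exact rsp_min (sameRunLe_split (rsp_srl q) (hle.trans (rsp_le p)) h.le).1

lemma rep_eq_of_mem {p q : Fin n} (h1 : runStartPos π p ≤ q) (h2 : q ≤ runEndPos π p) :
    runEndPos π q = runEndPos π p := by
  have hle : runEndPos π p ≤ runEndPos π q := by
    rcases le_or_gt p q with h | h
    · exact rep_max (sameRunLe_split (rep_srl p) h h2).2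
    · exact rep_max (sameRunLe_trans (sameRunLe_split (rsp_srl p) h1 h.le).2 (rep_srl p))
  refine le_antisymm ?_ hle
  rcases le_or_gt p q with h | h
  · exact rep_max (sameRunLe_trans (sameRunLe_split (rep_srl p) h h2).1 (rep_srl q))
  · exact rep_max (sameRunLe_split (rep_srl q) h.le ((le_rep p).trans hle)).2

lemma mem_of_rsp_eq {p q : Fin n} (h : runStartPos π q = runStartPos π p) :
    runStartPos π p ≤ q ∧ q ≤ runEndPos π p := by
  constructor
  · rw [← h]; exact rsp_le q
  · rcases le_or_gt q p with hle | hlt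
    · exact hle.trans (le_rep p)
    · have : SameRunLe π p q := by
        have := (sameRunLe_split (rsp_srl q) (by rw [h]; exact rsp_le p) hlt.le).2
        exact this
      exact rep_max this

lemma rep_eq_of_rsp_eq {p q : Fin n} (h : runStartPos π q = runStartPos π p) :
    runEndPos π q = runEndPos π p := by
  obtain ⟨h1, h2⟩ := mem_of_rsp_eq h
  exact rep_eq_of_mem h1 h2

lemma rsp_eq_iff_mem {p q : Fin n} :
    runStartPos π q = runStartPos π p ↔ (runStartPos π p ≤ q ∧ q ≤ runEndPos π p) :=
  ⟨mem_of_rsp_eq, fun h => rsp_eq_of_mem h.1 h.2⟩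

end Stmt11
namespace Stmt11

variable {n : ℕ} {π : Equiv.Perm (Fin n)}

lemma rsp_eq_self_iff {p : Fin n} :
    runStartPos π p = p ↔ (p.val = 0 ∨ ¬ IsDesc π (p.val - 1)) := by
  constructor
  · intro h
    by_contra hc
    push_neg at hc
    obtain ⟨h0, hd⟩ := hc
    have hq : SameRunLe π ⟨p.val - 1, by omega⟩ p := by
      refine ⟨Fin.le_def.mpr (Nat.sub_le _ _), fun k hk hk' => ?_⟩
      simp only at hk
      have : k = p.val - 1 := by omega
      rwa [this]
    have := rsp_min hq
    rw [h] at this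
    simp [Fin.le_def] at this
    omega
  · intro h
    refine le_antisymm (rsp_le p) ?_
    by_contra hc
    push_neg at hc
    have hlt : (runStartPos π p).val < p.val := hc
    have hd := (rsp_srl (π := π) p).2 (p.val - 1) (by omega) (by omega)
    rcases h with h0 | hnd
    · omega
    · exact hnd hd

lemma rep_eq_self_iff {p : Fin n} :
    runEndPos π p = p ↔ (p.val + 1 = n ∨ ¬ IsDesc π p.val) := by
  constructor
  · intro h
    by_contra hc
    push_neg at hc
    obtain ⟨h0, hd⟩ := hc
    have hn : p.val + 1 < n := by
      obtain ⟨hk, _⟩ := hd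
      exact hk
    have hq : SameRunLe π p ⟨p.val + 1, hn⟩ := by
      refine ⟨Fin.le_def.mpr (by simp), fun k hk hk' => ?_⟩
      simp only at hk'
      have : k = p.val := by omega
      rwa [this]
    have := rep_max hq
    rw [h] at this
    simp [Fin.le_def] at this
  · intro h
    refine le_antisymm ?_ (le_rep p)
    by_contra hc
    push_neg at hc
    have hlt : p.val < (runEndPos π p).val := hc
    have hd := (rep_srl p).2 p.val le_rfl hlt
    rcases h with h0 | hnd
    · obtain ⟨hk, _⟩ := hd; omega
    · exact hnd hd

lemma run_decr_one {a b : Fin n} (h : SameRunLe π a b) (hb : b.val = a.val + 1) :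
    π b < π a := by
  obtain ⟨hk, hlt⟩ := h.2 a.val le_rfl (by omega)
  have ha : (⟨a.val, Nat.lt_of_succ_lt hk⟩ : Fin n) = a := rfl
  have hb' : (⟨a.val + 1, hk⟩ : Fin n) = b := Fin.ext (by simp [hb])
  rwa [ha, hb'] at hlt

lemma run_decr_aux : ∀ (m : ℕ) (a b : Fin n), SameRunLe π a b → b.val = a.val + m + 1 →
    π b < π a := by
  intro m
  induction m with
  | zero => exact fun a b h hb => run_decr_one h (by omega)
  | succ m ih =>
    intro a b h hb
    have hcn : a.val + m + 1 < n := by omega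
    have hac : a ≤ (⟨a.val + m + 1, hcn⟩ : Fin n) := Fin.le_def.mpr (by simp; omega)
    have hcb : (⟨a.val + m + 1, hcn⟩ : Fin n) ≤ b := Fin.le_def.mpr (by simp; omega)
    have hsplit := sameRunLe_split h hac hcb
    have h1 := ih a _ hsplit.1 rfl
    have h2 := run_decr_one hsplit.2 (by simp; omega)
    exact h2.trans h1

lemma sameRunLe_lt {a b : Fin n} (h : SameRunLe π a b) (hab : a < b) : π b < π a :=
  run_decr_aux (b.val - a.val - 1) a b h (by omega)

lemma mem_runOf_iff {v w : Fin n} :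
    w ∈ runOf π v ↔ runStartPos π (π.symm w) = runStartPos π (π.symm v) := by
  simp [runOf]

lemma mem_runOf_iff_pos {v w : Fin n} :
    w ∈ runOf π v ↔ (runStartPos π (π.symm v) ≤ π.symm w ∧
      π.symm w ≤ runEndPos π (π.symm v)) := by
  rw [mem_runOf_iff, rsp_eq_iff_mem]

lemma self_mem_runOf (v : Fin n) : v ∈ runOf π v := mem_runOf_iff.mpr rfl

lemma runOf_eq_of_mem {v w : Fin n} (h : w ∈ runOf π v) : runOf π w = runOf π v := by
  ext x
  rw [mem_runOf_iff, mem_runOf_iff, mem_runOf_iff.mp h]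

lemma mem_RT_iff {v : Fin n} : v ∈ RT π ↔ runStartPos π (π.symm v) = π.symm v := by
  simp only [RT, Finset.mem_filter, Finset.mem_univ, true_and]
  simp only [runTopVal]
  constructor
  · intro h
    have := π.symm.apply_eq_iff_eq_symm_apply.mpr h.symm
    simpa using this.symm
  · intro h; rw [h]; simp

lemma mem_RB_iff {v : Fin n} : v ∈ RB π ↔ runEndPos π (π.symm v) = π.symm v := by
  simp only [RB, Finset.mem_filter, Finset.mem_univ, true_and]
  simp only [runBotVal]
  constructor
  · intro h
    have := π.symm.apply_eq_iff_eq_symm_apply.mpr h.symm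
    simpa using this.symm
  · intro h; rw [h]; simp

lemma runTopVal_mem (v : Fin n) : runTopVal π v ∈ runOf π v := by
  rw [runTopVal, mem_runOf_iff_pos]
  simp only [Equiv.symm_apply_apply]
  constructor
  · exact rsp_eq_of_mem (le_refl _) ((rsp_le _).trans (le_rep _)) ▸ le_refl _
  · calc runStartPos π (π.symm v) ≤ π.symm v := rsp_le _
      _ ≤ runEndPos π (π.symm v) := le_rep _

lemma le_runTopVal {v w : Fin n} (h : w ∈ runOf π v) : w ≤ runTopVal π v := by
  rw [mem_runOf_iff_pos] at h
  rw [runTopVal]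
  rcases eq_or_lt_of_le h.1 with he | hlt
  · rw [he]; simp
  · have hd : π (π.symm w) < π (runStartPos π (π.symm v)) :=
      sameRunLe_lt (sameRunLe_split (rsp_rep_srl (π.symm v)) h.1 h.2).1 hlt
    simp at hd
    exact hd.le

lemma runBotVal_mem (v : Fin n) : runBotVal π v ∈ runOf π v := by
  rw [runBotVal, mem_runOf_iff_pos]
  simp only [Equiv.symm_apply_apply]
  constructor
  · calc runStartPos π (π.symm v) ≤ π.symm v := rsp_le _
      _ ≤ runEndPos π (π.symm v) := le_rep _
  · exact le_refl _

lemma runBotVal_le {v w : Fin n} (h : w ∈ runOf π v) : runBotVal π v ≤ w := by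
  rw [mem_runOf_iff_pos] at h
  rw [runBotVal]
  rcases eq_or_lt_of_le h.2 with he | hlt
  · rw [← he]; simp
  · have hd : π (runEndPos π (π.symm v)) < π (π.symm w) :=
      sameRunLe_lt (sameRunLe_split (rsp_rep_srl (π.symm v)) h.1 h.2).2 hlt
    simp at hd
    exact hd.le

end Stmt11
namespace Stmt11

set_option maxRecDepth 8000

variable {n : ℕ} {π π' : Equiv.Perm (Fin n)}

/-- The successor of `v` within its run: the smallest element of the run larger than `v`. -/
noncomputable def Fm (π : Equiv.Perm (Fin n)) (v : Fin n) : Fin n :=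
  if h : ((runOf π v).filter fun w => v < w).Nonempty
  then ((runOf π v).filter fun w => v < w).min' h else v

lemma not_mem_RT_pos {v : Fin n} (hv : v ∉ RT π) :
    (runStartPos π (π.symm v)).val < (π.symm v).val :=
  Fin.lt_def.mp (lt_of_le_of_ne (rsp_le _) (fun h => hv (mem_RT_iff.mpr h)))

lemma not_mem_RB_pos {v : Fin n} (hv : v ∉ RB π) :
    (π.symm v).val < (runEndPos π (π.symm v)).val :=
  Fin.lt_def.mp (lt_of_le_of_ne (le_rep _) (fun h => hv (mem_RB_iff.mpr h.symm)))

lemma run_decr_pos {p a b : Fin n} (h1 : runStartPos π p ≤ a) (h2 : a < b)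
    (h3 : b ≤ runEndPos π p) : π b < π a := by
  have hs := sameRunLe_split (rsp_rep_srl p) h1 (h2.le.trans h3)
  exact sameRunLe_lt (sameRunLe_split hs.2 h2.le h3).1 h2

lemma prev_mem_filter {v : Fin n} (hv : v ∉ RT π) :
    π ⟨(π.symm v).val - 1, by omega⟩ ∈ (runOf π v).filter fun w => v < w := by
  have hlt := not_mem_RT_pos hv
  have hq1 : runStartPos π (π.symm v) ≤ (⟨(π.symm v).val - 1, by omega⟩ : Fin n) :=
    Fin.le_def.mpr (by simp only []; omega)
  have hq2 : (⟨(π.symm v).val - 1, by omega⟩ : Fin n) ≤ runEndPos π (π.symm v) :=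
    le_trans (Fin.le_def.mpr (by simp only []; omega)) (le_rep _)
  rw [Finset.mem_filter, mem_runOf_iff_pos]
  refine ⟨⟨by simpa using hq1, by simpa using hq2⟩, ?_⟩
  have hd : π (π.symm v) < π ⟨(π.symm v).val - 1, by omega⟩ :=
    run_decr_pos hq1 (Fin.lt_def.mpr (by simp only []; omega)) (le_rep _)
  simpa using hd

lemma Fm_eq_prev {v : Fin n} (hv : v ∉ RT π) :
    Fm π v = π ⟨(π.symm v).val - 1, by omega⟩ := by
  have hlt := not_mem_RT_pos hv
  have hmem := prev_mem_filter hv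
  have hne : ((runOf π v).filter fun w => v < w).Nonempty := ⟨_, hmem⟩
  rw [Fm, dif_pos hne]
  refine le_antisymm (Finset.min'_le _ _ hmem) ?_
  rw [Finset.le_min'_iff]
  intro y hy
  rw [Finset.mem_filter, mem_runOf_iff_pos] at hy
  obtain ⟨⟨hy1, hy2⟩, hvy⟩ := hy
  have hylt : (π.symm y).val < (π.symm v).val := by
    rcases lt_trichotomy (π.symm y).val (π.symm v).val with h | h | h
    · exact h
    · exfalso
      have : π.symm y = π.symm v := Fin.ext h
      have : y = v := by simpa using congrArg π this
      exact absurd (this ▸ hvy) (lt_irrefl _)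
    · exfalso
      have hd : π (π.symm y) < π (π.symm v) :=
        run_decr_pos (rsp_le _) (Fin.lt_def.mpr h) hy2
      simp only [Equiv.apply_symm_apply] at hd
      exact absurd (hvy.trans hd) (lt_irrefl _)
  rcases eq_or_lt_of_le (show (π.symm y).val ≤ (π.symm v).val - 1 by omega) with he | hlt'
  · have : (⟨(π.symm v).val - 1, by omega⟩ : Fin n) = π.symm y := Fin.ext he.symm
    rw [this]; simp
  · have hd : π (⟨(π.symm v).val - 1, by omega⟩ : Fin n) < π (π.symm y) :=
      run_decr_pos hy1 (Fin.lt_def.mpr (by simpa using hlt'))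
        (le_trans (Fin.le_def.mpr (by simp only []; omega)) (le_rep _))
    simp only [Equiv.apply_symm_apply] at hd
    exact hd.le

lemma Fm_mem_filter {v : Fin n} (hv : v ∉ RT π) :
    Fm π v ∈ (runOf π v).filter fun w => v < w := by
  rw [Fm_eq_prev hv]; exact prev_mem_filter hv

lemma Fm_gt {v : Fin n} (hv : v ∉ RT π) : v < Fm π v :=
  (Finset.mem_filter.mp (Fm_mem_filter hv)).2

lemma Fm_mem_runOf {v : Fin n} (hv : v ∉ RT π) : Fm π v ∈ runOf π v :=
  (Finset.mem_filter.mp (Fm_mem_filter hv)).1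

lemma Fm_symm_pos {v : Fin n} (hv : v ∉ RT π) :
    (π.symm (Fm π v)).val = (π.symm v).val - 1 := by
  rw [Fm_eq_prev hv]; simp

lemma Fm_inj {v w : Fin n} (hv : v ∉ RT π) (hw : w ∉ RT π) (h : Fm π v = Fm π w) : v = w := by
  have h1 := Fm_symm_pos hv
  have h2 := Fm_symm_pos hw
  rw [h] at h1
  have hv' := not_mem_RT_pos hv
  have hw' := not_mem_RT_pos hw
  have heq : π.symm v = π.symm w := Fin.ext (by omega)
  simpa using congrArg π heq

lemma Fm_not_mem_RB {v : Fin n} (hv : v ∉ RT π) : Fm π v ∉ RB π := by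
  rw [mem_RB_iff]
  intro h
  have hpos := Fm_symm_pos hv
  have hlt := not_mem_RT_pos hv
  have hmem := Fm_mem_runOf hv
  rw [mem_runOf_iff] at hmem
  have hrep : (runEndPos π (π.symm (Fm π v))).val = (runEndPos π (π.symm v)).val :=
    congrArg Fin.val (rep_eq_of_rsp_eq hmem)
  have h' : (runEndPos π (π.symm (Fm π v))).val = (π.symm (Fm π v)).val :=
    congrArg Fin.val h
  have hle : (π.symm v).val ≤ (runEndPos π (π.symm v)).val := Fin.le_def.mp (le_rep _)
  omega

lemma Fm_surj {y : Fin n} (hy : y ∉ RB π) : ∃ x, x ∉ RT π ∧ Fm π x = y := by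
  have hlt := not_mem_RB_pos hy
  have hn : (π.symm y).val + 1 < n := by
    have := (runEndPos π (π.symm y)).isLt
    omega
  have hrsp : runStartPos π (⟨(π.symm y).val + 1, hn⟩ : Fin n) =
      runStartPos π (π.symm y) := by
    refine rsp_eq_of_mem (le_trans (rsp_le _) (Fin.le_def.mpr (by simp only []; omega)))
      (Fin.le_def.mpr (by simp only []; omega))
  have hnotRT : π (⟨(π.symm y).val + 1, hn⟩ : Fin n) ∉ RT π := by
    rw [mem_RT_iff]
    simp only [Equiv.symm_apply_apply]
    intro hc
    have h1 := congrArg Fin.val hc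
    rw [hrsp] at h1
    have := Fin.le_def.mp (rsp_le (π := π) (π.symm y))
    simp only [] at h1
    omega
  refine ⟨_, hnotRT, ?_⟩
  rw [Fm_eq_prev hnotRT]
  simp only [Equiv.symm_apply_apply]
  have : (⟨(π.symm y).val + 1 - 1, by omega⟩ : Fin n) = π.symm y := Fin.ext (by simp)
  rw [this]
  simp

lemma mem_RT_iff_forall {v : Fin n} : v ∈ RT π ↔ ∀ w ∈ runOf π v, w ≤ v := by
  constructor
  · intro h w hw
    have h2 := le_runTopVal hw
    have h3 : runTopVal π v = v := (Finset.mem_filter.mp h).2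
    rwa [h3] at h2
  · intro h
    have h1 : runTopVal π v ≤ v := h _ (runTopVal_mem v)
    have h2 : v ≤ runTopVal π v := le_runTopVal (self_mem_runOf v)
    exact Finset.mem_filter.mpr ⟨Finset.mem_univ v, le_antisymm h1 h2⟩

lemma mem_RB_iff_forall {v : Fin n} : v ∈ RB π ↔ ∀ w ∈ runOf π v, v ≤ w := by
  constructor
  · intro h w hw
    have h2 := runBotVal_le hw
    have h3 : runBotVal π v = v := (Finset.mem_filter.mp h).2
    rwa [h3] at h2
  · intro h
    have h1 : v ≤ runBotVal π v := h _ (runBotVal_mem v)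
    have h2 : runBotVal π v ≤ v := runBotVal_le (self_mem_runOf v)
    exact Finset.mem_filter.mpr ⟨Finset.mem_univ v, le_antisymm h2 h1⟩

lemma runOf_congr (h : runsSet π' = runsSet π) (v : Fin n) : runOf π' v = runOf π v := by
  have h1 : runOf π' v ∈ runsSet π := by
    rw [← h, runsSet]
    exact Finset.mem_image.mpr ⟨v, Finset.mem_univ v, rfl⟩
  rw [runsSet] at h1
  obtain ⟨u, _, hu⟩ := Finset.mem_image.mp h1
  have hv : v ∈ runOf π u := by rw [hu]; exact self_mem_runOf v
  rw [← hu, runOf_eq_of_mem hv]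

lemma RT_congr (h : runsSet π' = runsSet π) : RT π' = RT π := by
  ext v
  rw [mem_RT_iff_forall, mem_RT_iff_forall, runOf_congr h]

lemma RB_congr (h : runsSet π' = runsSet π) : RB π' = RB π := by
  ext v
  rw [mem_RB_iff_forall, mem_RB_iff_forall, runOf_congr h]

lemma Fm_congr (h : runsSet π' = runsSet π) (v : Fin n) : Fm π' v = Fm π v := by
  rw [Fm, Fm, runOf_congr h]

end Stmt11
namespace Stmt11

set_option maxRecDepth 8000

variable {n : ℕ} {π π' : Equiv.Perm (Fin n)}

/-- `p` is the position of a left-to-right maximum of `π'`. -/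
def isLR (π' : Equiv.Perm (Fin n)) (p : Fin n) : Prop :=
  ∀ q : Fin n, q < p → π' q < π' p

noncomputable def segEnd (π' : Equiv.Perm (Fin n)) (p : Fin n) : Fin n :=
  (Finset.univ.filter fun e => p ≤ e ∧ ∀ q : Fin n, p < q → q ≤ e → ¬ isLR π' q).max'
    ⟨p, Finset.mem_filter.mpr ⟨Finset.mem_univ p, le_refl p,
      fun q hq hq' => absurd (hq.trans_le hq') (lt_irrefl _)⟩⟩

lemma isLR_zero {p : Fin n} (hp : p.val = 0) : isLR π' p :=
  fun q hq => absurd (Fin.lt_def.mp hq) (by omega)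

lemma not_isLR_pos {p : Fin n} (hp : ¬ isLR π' p) : 0 < p.val := by
  by_contra h
  exact hp (isLR_zero (by omega))

lemma le_segEnd (p : Fin n) : p ≤ segEnd π' p := by
  have := Finset.max'_mem (Finset.univ.filter fun e => p ≤ e ∧
    ∀ q : Fin n, p < q → q ≤ e → ¬ isLR π' q)
    ⟨p, Finset.mem_filter.mpr ⟨Finset.mem_univ p, le_refl p,
      fun q hq hq' => absurd (hq.trans_le hq') (lt_irrefl _)⟩⟩
  exact (Finset.mem_filter.mp this).2.1

lemma segEnd_prop {p q : Fin n} (h1 : p < q) (h2 : q ≤ segEnd π' p) : ¬ isLR π' q := by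
  have := Finset.max'_mem (Finset.univ.filter fun e => p ≤ e ∧
    ∀ q : Fin n, p < q → q ≤ e → ¬ isLR π' q)
    ⟨p, Finset.mem_filter.mpr ⟨Finset.mem_univ p, le_refl p,
      fun q hq hq' => absurd (hq.trans_le hq') (lt_irrefl _)⟩⟩
  exact (Finset.mem_filter.mp this).2.2 q h1 h2

lemma mem_segEndSet {p e : Fin n} (h1 : p ≤ e) (h2 : ∀ q : Fin n, p < q → q ≤ e → ¬ isLR π' q) :
    e ≤ segEnd π' p :=
  Finset.le_max' _ e (Finset.mem_filter.mpr ⟨Finset.mem_univ e, h1, h2⟩)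

lemma segEnd_succ_isLR {p : Fin n} (h : (segEnd π' p).val + 1 < n) :
    isLR π' ⟨(segEnd π' p).val + 1, h⟩ := by
  by_contra hc
  have hle : (⟨(segEnd π' p).val + 1, h⟩ : Fin n) ≤ segEnd π' p := by
    refine mem_segEndSet (le_trans (le_segEnd (π' := π') p) (Fin.le_def.mpr (by simp only []; omega)))
      (fun q hq hq' => ?_)
    rcases eq_or_lt_of_le hq' with he | hlt
    · rw [he]; exact hc
    · exact segEnd_prop hq (Fin.le_def.mpr (by
        have := Fin.lt_def.mp hlt
        simp only [] at this ⊢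
        omega))
  have := Fin.le_def.mp hle
  simp only [] at this
  omega

lemma lr_seg_le_aux {h : Fin n} (hh : isLR π' h) :
    ∀ m : ℕ, ∀ q : Fin n, q.val = m → h ≤ q →
      (∀ r : Fin n, h < r → r ≤ q → ¬ isLR π' r) → π' q ≤ π' h := by
  intro m
  induction m using Nat.strong_induction_on with
  | _ m ih =>
    intro q hq hle hint
    rcases eq_or_lt_of_le hle with he | hlt
    · rw [← he]
    · have hnl : ¬ isLR π' q := hint q hlt le_rfl
      simp only [isLR, not_forall] at hnl
      obtain ⟨j, hj, hge⟩ := hnl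
      have hje : π' q < π' j := by
        rcases lt_or_ge (π' q) (π' j) with h' | h'
        · exact h'
        · exact absurd (lt_of_le_of_ne h' (fun hceq =>
            (ne_of_lt hj) (π'.injective hceq))) hge
      rcases le_or_gt j h with hjh | hjh
      · rcases eq_or_lt_of_le hjh with he' | hlt'
        · exact (he' ▸ hje).le
        · exact (hje.trans (hh j hlt')).le
      · have : π' j ≤ π' h := ih j.val (by
            have := Fin.lt_def.mp hj
            omega) j rfl hjh.le
          (fun r hr hr' => hint r hr (hr'.trans hj.le))
        exact (hje.trans_le this).le

lemma lr_seg_le {h q : Fin n} (hh : isLR π' h) (hle : h ≤ q)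
    (hint : ∀ r : Fin n, h < r → r ≤ q → ¬ isLR π' r) : π' q ≤ π' h :=
  lr_seg_le_aux hh q.val q rfl hle hint

/-- The position-remapping permutation underlying the Foata-type bijection. -/
noncomputable def rmap (π' : Equiv.Perm (Fin n)) (p : Fin n) : Fin n :=
  if isLR π' p then segEnd π' p
  else ⟨p.val - 1, Nat.lt_of_le_of_lt (Nat.sub_le _ _) p.isLt⟩

lemma rmap_injective : Function.Injective (rmap π') := by
  intro a b hab
  by_cases ha : isLR π' a <;> by_cases hb : isLR π' b
  · -- both LR
    rw [rmap, if_pos ha, rmap, if_pos hb] at hab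
    rcases lt_trichotomy a b with h | h | h
    · exact absurd hb (segEnd_prop h (hab ▸ le_segEnd b))
    · exact h
    · exact absurd ha (segEnd_prop h (hab.symm ▸ le_segEnd a))
  · rw [rmap, if_pos ha, rmap, if_neg hb] at hab
    exfalso
    have hb0 := not_isLR_pos hb
    have h1 : (segEnd π' a).val = b.val - 1 := congrArg Fin.val hab
    have h2 : (segEnd π' a).val + 1 < n := by
      have := b.isLt
      omega
    have := segEnd_succ_isLR h2
    have hbe : (⟨(segEnd π' a).val + 1, h2⟩ : Fin n) = b := Fin.ext (by simp only []; omega)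
    exact hb (hbe ▸ this)
  · rw [rmap, if_neg ha, rmap, if_pos hb] at hab
    exfalso
    have ha0 := not_isLR_pos ha
    have h1 : (segEnd π' b).val = a.val - 1 := (congrArg Fin.val hab).symm
    have h2 : (segEnd π' b).val + 1 < n := by
      have := a.isLt
      omega
    have := segEnd_succ_isLR h2
    have hae : (⟨(segEnd π' b).val + 1, h2⟩ : Fin n) = a := Fin.ext (by simp only []; omega)
    exact ha (hae ▸ this)
  · rw [rmap, if_neg ha, rmap, if_neg hb] at hab
    have h1 := congrArg Fin.val hab
    simp only [] at h1
    have := not_isLR_pos ha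
    have := not_isLR_pos hb
    exact Fin.ext (by omega)

noncomputable def rPerm (π' : Equiv.Perm (Fin n)) : Equiv.Perm (Fin n) :=
  Equiv.ofBijective (rmap π') (Finite.injective_iff_bijective.mp rmap_injective)

lemma rPerm_apply (p : Fin n) : rPerm π' p = rmap π' p := rfl

/-- The Foata-type map. -/
noncomputable def PhiF (π' : Equiv.Perm (Fin n)) : Equiv.Perm (Fin n) :=
  π' * (rPerm π') * π'⁻¹

lemma PhiF_apply (x : Fin n) : PhiF π' x = π' (rmap π' (π'.symm x)) := rfl

end Stmt11
namespace Stmt11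

set_option maxRecDepth 8000

variable {n : ℕ} {π π' : Equiv.Perm (Fin n)}

lemma PhiF_fm (hrs : runsSet π' = runsSet π) {x : Fin n} (hx : x ∉ RT π) :
    PhiF π' x = Fm π x := by
  have hx' : x ∉ RT π' := by rw [RT_congr hrs]; exact hx
  have hlt := not_mem_RT_pos hx'
  have hnl : ¬ isLR π' (π'.symm x) := by
    intro hl
    have hd : π' (π'.symm x) < π' ⟨(π'.symm x).val - 1, by omega⟩ :=
      run_decr_pos (Fin.le_def.mpr (by simp only []; omega))
        (Fin.lt_def.mpr (by simp only []; omega)) (le_rep _)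
    have h2 := hl ⟨(π'.symm x).val - 1, by omega⟩ (Fin.lt_def.mpr (by simp only []; omega))
    exact absurd (hd.trans h2) (lt_irrefl _)
  rw [PhiF_apply, rmap, if_neg hnl, ← Fm_congr hrs x, Fm_eq_prev hx']

lemma PhiF_le (hrs : runsSet π' = runsSet π) {t : Fin n} (ht : t ∈ RT π) :
    PhiF π' t ≤ t := by
  have ht' : t ∈ RT π' := (RT_congr hrs).symm ▸ ht
  have hsp : runStartPos π' (π'.symm t) = π'.symm t := mem_RT_iff.mp ht'
  rw [PhiF_apply, rmap]
  by_cases hl : isLR π' (π'.symm t)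
  · rw [if_pos hl]
    have h := lr_seg_le hl (le_segEnd _) (fun r h1 h2 => segEnd_prop h1 h2)
    simpa using h
  · rw [if_neg hl]
    have h0 := not_isLR_pos hl
    have hnd : ¬ IsDesc π' ((π'.symm t).val - 1) := by
      rcases rsp_eq_self_iff.mp hsp with h | h
      · omega
      · exact h
    by_contra hc
    push_neg at hc
    apply hnd
    have hislt := (π'.symm t).isLt
    refine ⟨by omega, ?_⟩
    have hpe : (⟨(π'.symm t).val - 1 + 1, by omega⟩ : Fin n) = π'.symm t :=
      Fin.ext (by simp only []; omega)
    rw [hpe]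
    simpa using hc

end Stmt11
namespace Stmt11

set_option maxRecDepth 8000

variable {n : ℕ} {σ : Equiv.Perm (Fin n)}

/-- The maximum of the cycle of `σ` containing `v`. -/
noncomputable def cmax (σ : Equiv.Perm (Fin n)) (v : Fin n) : Fin n :=
  (Finset.univ.filter fun w => σ.SameCycle v w).max'
    ⟨v, Finset.mem_filter.mpr ⟨Finset.mem_univ v, Equiv.Perm.SameCycle.refl σ v⟩⟩

lemma cmax_sameCycle (σ : Equiv.Perm (Fin n)) (v : Fin n) : σ.SameCycle v (cmax σ v) := by
  have := Finset.max'_mem (Finset.univ.filter fun w => σ.SameCycle v w)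
    ⟨v, Finset.mem_filter.mpr ⟨Finset.mem_univ v, Equiv.Perm.SameCycle.refl σ v⟩⟩
  exact (Finset.mem_filter.mp this).2

lemma le_cmax_of_sameCycle {v w : Fin n} (h : σ.SameCycle v w) : w ≤ cmax σ v :=
  Finset.le_max' _ w (Finset.mem_filter.mpr ⟨Finset.mem_univ w, h⟩)

lemma le_cmax (σ : Equiv.Perm (Fin n)) (v : Fin n) : v ≤ cmax σ v :=
  le_cmax_of_sameCycle (Equiv.Perm.SameCycle.refl σ v)

lemma cmax_congr {v w : Fin n} (h : σ.SameCycle v w) : cmax σ v = cmax σ w := by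
  unfold cmax
  congr 1
  ext u
  simp only [Finset.mem_filter, Finset.mem_univ, true_and]
  exact ⟨fun h' => (h.symm).trans h', fun h' => h.trans h'⟩

lemma exists_pow_cmax (σ : Equiv.Perm (Fin n)) (v : Fin n) :
    ∃ j : ℕ, (σ ^ j) v = cmax σ v := by
  obtain ⟨i, _, hi⟩ := (cmax_sameCycle σ v).exists_pow_eq'
  exact ⟨i, hi⟩

/-- The number of steps from `v` to the maximum of its cycle. -/
noncomputable def kval (σ : Equiv.Perm (Fin n)) (v : Fin n) : ℕ :=
  Nat.find (exists_pow_cmax σ v)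

lemma kval_spec (σ : Equiv.Perm (Fin n)) (v : Fin n) : (σ ^ kval σ v) v = cmax σ v :=
  Nat.find_spec (exists_pow_cmax σ v)

lemma kval_min {v : Fin n} {j : ℕ} (h : j < kval σ v) : (σ ^ j) v ≠ cmax σ v :=
  Nat.find_min (exists_pow_cmax σ v) h

lemma kval_lt_n (σ : Equiv.Perm (Fin n)) (v : Fin n) : kval σ v < n := by
  have hinj : Function.Injective (fun j : Fin (kval σ v + 1) => (σ ^ j.val) v) := by
    intro a b hab
    by_contra hne
    wlog hlt : a.val < b.val generalizing a b
    · exact this hab.symm (Ne.symm hne) (by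
        rcases lt_trichotomy a.val b.val with h | h | h
        · exact absurd h hlt
        · exact absurd (Fin.ext h) hne
        · exact h)
    · have hab' : (σ ^ a.val) v = (σ ^ b.val) v := hab
      have key : (σ ^ (kval σ v - b.val + a.val)) v = cmax σ v := by
        have h1 : (σ ^ (kval σ v - b.val)) ((σ ^ b.val) v) = cmax σ v := by
          rw [← Equiv.Perm.mul_apply, ← pow_add]
          have he : kval σ v - b.val + b.val = kval σ v := by omega
          rw [he]
          exact kval_spec σ v
        rw [← hab'] at h1
        rwa [← Equiv.Perm.mul_apply, ← pow_add] at h1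
      have hb := b.isLt
      exact kval_min (by omega) key
  have := Fintype.card_le_of_injective _ hinj
  simp at this
  have hn : 0 < n := (cmax σ v).pos
  omega

lemma kval_eq_zero_iff {v : Fin n} : kval σ v = 0 ↔ v = cmax σ v := by
  rw [kval, Nat.find_eq_zero]
  simp

lemma cmax_inv {x : Fin n} : cmax σ (σ⁻¹ x) = cmax σ x :=
  cmax_congr ⟨1, by simp⟩

lemma cmax_apply {x : Fin n} : cmax σ (σ x) = cmax σ x :=
  cmax_congr ⟨-1, by simp⟩

lemma kval_inv {x : Fin n} (h : σ⁻¹ x ≠ cmax σ x) : kval σ (σ⁻¹ x) = kval σ x + 1 := by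
  refine le_antisymm ?_ ?_
  · refine Nat.find_le ?_
    rw [cmax_inv]
    rw [pow_succ, Equiv.Perm.mul_apply, (Equiv.Perm.eq_inv_iff_eq (f := σ) (x := σ⁻¹ x) (y := x)).mp rfl]
    exact kval_spec σ x
  · by_contra hc
    push_neg at hc
    have hj := kval_spec σ (σ⁻¹ x)
    rw [cmax_inv] at hj
    rcases Nat.eq_zero_or_pos (kval σ (σ⁻¹ x)) with h0 | hpos
    · rw [h0] at hj
      simp at hj
      exact h hj
    · obtain ⟨j', hj'⟩ : ∃ j', kval σ (σ⁻¹ x) = j' + 1 := ⟨_, (Nat.succ_pred_eq_of_pos hpos).symm⟩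
      rw [hj', pow_succ, Equiv.Perm.mul_apply, (Equiv.Perm.eq_inv_iff_eq (f := σ) (x := σ⁻¹ x) (y := x)).mp rfl] at hj
      exact kval_min (by omega) hj

lemma kval_apply {x : Fin n} (h : x ≠ cmax σ x) : kval σ (σ x) = kval σ x - 1 := by
  have hk : 0 < kval σ x := by
    rcases Nat.eq_zero_or_pos (kval σ x) with h0 | hpos
    · exact absurd (kval_eq_zero_iff.mp h0) h
    · exact hpos
  refine le_antisymm ?_ ?_
  · refine Nat.find_le ?_
    rw [cmax_apply]
    have h2 : (σ ^ (kval σ x - 1)) (σ x) = (σ ^ kval σ x) x := by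
      rw [← Equiv.Perm.mul_apply, ← pow_succ]
      have he : kval σ x - 1 + 1 = kval σ x := by omega
      rw [he]
    rw [h2]
    exact kval_spec σ x
  · by_contra hc
    push_neg at hc
    have hj := kval_spec σ (σ x)
    rw [cmax_apply] at hj
    have h3 : (σ ^ (kval σ (σ x) + 1)) x = cmax σ x := by
      rw [pow_succ, Equiv.Perm.mul_apply]
      exact hj
    exact kval_min (by omega) h3

lemma kval_le_of_inv_cmax {x v : Fin n} (h : σ⁻¹ x = cmax σ x) (hs : σ.SameCycle x v) :
    kval σ v ≤ kval σ x := by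
  by_contra hc
  push_neg at hc
  have hcm : cmax σ v = cmax σ x := (cmax_congr hs).symm
  have key : (σ ^ (kval σ x + 1)) ((σ ^ (kval σ v - kval σ x - 1)) v) = cmax σ v := by
    rw [← Equiv.Perm.mul_apply, ← pow_add]
    have : kval σ x + 1 + (kval σ v - kval σ x - 1) = kval σ v := by omega
    rw [this]
    exact kval_spec σ v
  rw [pow_succ, Equiv.Perm.mul_apply] at key
  have key2 : (σ ^ kval σ x) (σ ((σ ^ (kval σ v - kval σ x - 1)) v)) = (σ ^ kval σ x) x := by
    rw [key, hcm, kval_spec σ x]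
  have key3 : σ ((σ ^ (kval σ v - kval σ x - 1)) v) = x := (σ ^ kval σ x).injective key2
  have key4 : σ⁻¹ (σ ((σ ^ (kval σ v - kval σ x - 1)) v)) = σ⁻¹ x := congrArg (⇑σ⁻¹) key3
  rw [(Equiv.Perm.inv_eq_iff_eq (f := σ) (x := σ ((σ ^ (kval σ v - kval σ x - 1)) v)) (y := (σ ^ (kval σ v - kval σ x - 1)) v)).mpr rfl] at key4
  rw [h, ← hcm] at key4
  exact kval_min (by omega) key4

/-- The key for sorting: lexicographic in (cycle max, distance to cycle max). -/
noncomputable def keyF (σ : Equiv.Perm (Fin n)) (v : Fin n) : ℕ :=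
  (cmax σ v).val * n + kval σ v

lemma arith_lt {a b c d m : ℕ} (hb : b < m) (hac : a < c) : a * m + b < c * m + d := by
  have h1 : (a + 1) * m ≤ c * m := Nat.mul_le_mul_right m hac
  have h2 : (a + 1) * m = a * m + m := by ring
  omega

lemma arith_eq {a b c d m : ℕ} (hb : b < m) (hd : d < m) (h : a * m + b = c * m + d) :
    a = c ∧ b = d := by
  rcases lt_trichotomy a c with h' | h' | h'
  · exact absurd h (Nat.ne_of_lt (arith_lt hb h'))
  · subst h'; omega
  · exact absurd h.symm (Nat.ne_of_lt (arith_lt hd h'))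

lemma arith_lt_rev {a b c d m : ℕ} (hb : b < m) (hd : d < m)
    (h : a * m + b < c * m + d) : a < c ∨ (a = c ∧ b < d) := by
  rcases lt_trichotomy a c with h' | h' | h'
  · exact Or.inl h'
  · subst h'; exact Or.inr ⟨rfl, by omega⟩
  · exact absurd (arith_lt hd h').le (not_le.mpr h)

lemma keyF_inj : Function.Injective (keyF σ) := by
  intro v w h
  rw [keyF, keyF] at h
  obtain ⟨h1, h2⟩ := arith_eq (kval_lt_n σ v) (kval_lt_n σ w) h
  have hcm : cmax σ v = cmax σ w := Fin.ext h1
  have hs1 := kval_spec σ v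
  have hs2 := kval_spec σ w
  have h3 : (σ ^ kval σ v) v = (σ ^ kval σ v) w := by
    rw [hs1, hcm, ← hs2, ← h2]
  exact (σ ^ kval σ v).injective h3

/-- The inverse Foata-type map, realized by sorting values by `keyF`. -/
noncomputable def PsiF (σ : Equiv.Perm (Fin n)) : Equiv.Perm (Fin n) :=
  Tuple.sort (keyF σ)

lemma psiF_strictMono : StrictMono (keyF σ ∘ PsiF σ) :=
  (Tuple.monotone_sort (keyF σ)).strictMono_of_injective
    (keyF_inj.comp (PsiF σ).injective)

lemma psiF_key_lt {i j : Fin n} (h : i < j) : keyF σ (PsiF σ i) < keyF σ (PsiF σ j) :=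
  psiF_strictMono h

lemma psiF_pos_lt {i j : Fin n} (h : keyF σ (PsiF σ i) < keyF σ (PsiF σ j)) : i < j := by
  rcases lt_trichotomy i j with h' | h' | h'
  · exact h'
  · rw [h'] at h; exact absurd h (lt_irrefl _)
  · exact absurd (psiF_key_lt h') (not_lt.mpr h.le)

end Stmt11
namespace Stmt11

set_option maxRecDepth 8000

variable {n : ℕ} {σ : Equiv.Perm (Fin n)}

lemma arith_between {a b c d m : ℕ} (hb : b < m) (h1 : c * m ≤ a * m + b)
    (h2 : a * m + b ≤ c * m + d) (hd : d < m) : a = c := by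
  rcases lt_trichotomy a c with h' | h' | h'
  · exact absurd (arith_lt hb h' : a * m + b < c * m + 0) (by omega)
  · exact h'
  · exact absurd (arith_lt hd h' : c * m + d < a * m + 0) (by omega)

lemma cmax_cmax (v : Fin n) : cmax σ (cmax σ v) = cmax σ v :=
  (cmax_congr (cmax_sameCycle σ v)).symm

lemma kval_cmax (v : Fin n) : kval σ (cmax σ v) = 0 :=
  kval_eq_zero_iff.mpr (cmax_cmax v).symm

lemma sameCycle_of_cmax_eq {v u : Fin n} (h : cmax σ v = cmax σ u) : σ.SameCycle v u :=
  (cmax_sameCycle σ v).trans (h ▸ (cmax_sameCycle σ u).symm)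

lemma psiF_max_pos_lt {p : Fin n} (h : PsiF σ p ≠ cmax σ (PsiF σ p)) :
    ∃ q : Fin n, q < p ∧ PsiF σ q = cmax σ (PsiF σ p) := by
  refine ⟨(PsiF σ).symm (cmax σ (PsiF σ p)), ?_, by simp⟩
  apply psiF_pos_lt
  have hq : PsiF σ ((PsiF σ).symm (cmax σ (PsiF σ p))) = cmax σ (PsiF σ p) := by simp
  rw [hq, keyF, keyF, cmax_cmax, kval_cmax]
  have hk : kval σ (PsiF σ p) ≠ 0 := fun h0 => h (kval_eq_zero_iff.mp h0)
  omega

lemma psiF_isLR_iff {p : Fin n} : isLR (PsiF σ) p ↔ PsiF σ p = cmax σ (PsiF σ p) := by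
  constructor
  · intro hl
    by_contra h
    obtain ⟨q, hq, hqM⟩ := psiF_max_pos_lt h
    have h1 := hl q hq
    rw [hqM] at h1
    exact absurd (h1.trans (lt_of_le_of_ne (le_cmax σ (PsiF σ p)) h)) (lt_irrefl _)
  · intro h q hq
    have hkey := psiF_key_lt (σ := σ) hq
    rw [keyF, keyF, ← h] at hkey
    have hkq := kval_lt_n σ (PsiF σ q)
    have hkp := kval_lt_n σ (PsiF σ p)
    have hcc : (cmax σ (PsiF σ q)).val < (PsiF σ p).val := by
      rcases arith_lt_rev hkq hkp hkey with h' | ⟨h', h''⟩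
      · exact h'
      · exfalso
        have hce : cmax σ (PsiF σ q) = PsiF σ p := Fin.ext h'
        have hk0 : kval σ (PsiF σ p) = 0 := kval_eq_zero_iff.mpr h
        omega
    calc PsiF σ q ≤ cmax σ (PsiF σ q) := le_cmax σ _
      _ < PsiF σ p := Fin.lt_def.mpr hcc

lemma psiF_zero_max {p : Fin n} (hp : p.val = 0) : PsiF σ p = cmax σ (PsiF σ p) := by
  by_contra h
  obtain ⟨q, hq, _⟩ := psiF_max_pos_lt h
  have := Fin.lt_def.mp hq
  omega

lemma psiF_prev {p : Fin n} (h : PsiF σ p ≠ cmax σ (PsiF σ p)) :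
    0 < p.val ∧ σ (PsiF σ p) =
      PsiF σ ⟨p.val - 1, Nat.lt_of_le_of_lt (Nat.sub_le _ _) p.isLt⟩ := by
  have hk : 0 < kval σ (PsiF σ p) :=
    Nat.pos_of_ne_zero (fun h0 => h (kval_eq_zero_iff.mp h0))
  have hkey : keyF σ (σ (PsiF σ p)) = keyF σ (PsiF σ p) - 1 := by
    rw [keyF, keyF, cmax_apply, kval_apply h]
    omega
  have hkpos : 0 < keyF σ (PsiF σ p) := by rw [keyF]; omega
  have hwm : PsiF σ ((PsiF σ).symm (σ (PsiF σ p))) = σ (PsiF σ p) := by simp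
  have hmp : (PsiF σ).symm (σ (PsiF σ p)) < p := by
    apply psiF_pos_lt
    rw [hwm, hkey]
    omega
  have hmval := Fin.lt_def.mp hmp
  have hp0 : 0 < p.val := by omega
  have hme : ((PsiF σ).symm (σ (PsiF σ p))).val = p.val - 1 := by
    by_contra hne
    have hmlt : ((PsiF σ).symm (σ (PsiF σ p))).val < p.val - 1 := by omega
    have h1 := psiF_key_lt (σ := σ) (show (PsiF σ).symm (σ (PsiF σ p)) <
      (⟨p.val - 1, Nat.lt_of_le_of_lt (Nat.sub_le _ _) p.isLt⟩ : Fin n) from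
        Fin.lt_def.mpr (by simp only []; omega))
    have h2 := psiF_key_lt (σ := σ) (show (⟨p.val - 1, Nat.lt_of_le_of_lt (Nat.sub_le _ _)
      p.isLt⟩ : Fin n) < p from Fin.lt_def.mpr (by simp only []; omega))
    rw [hwm, hkey] at h1
    omega
  exact ⟨hp0, by
    rw [show (⟨p.val - 1, Nat.lt_of_le_of_lt (Nat.sub_le _ _) p.isLt⟩ : Fin n) =
      (PsiF σ).symm (σ (PsiF σ p)) from Fin.ext hme.symm]
    simp⟩

lemma psiF_next_max {m : Fin n}
    (hmax : ∀ v, σ.SameCycle (PsiF σ m) v → kval σ v ≤ kval σ (PsiF σ m))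
    (h : m.val + 1 < n) : isLR (PsiF σ) ⟨m.val + 1, h⟩ := by
  rw [psiF_isLR_iff]
  have hkey := psiF_key_lt (σ := σ) (show m < ⟨m.val + 1, h⟩ from
    Fin.lt_def.mpr (by simp only []; omega))
  have hcne : cmax σ (PsiF σ ⟨m.val + 1, h⟩) ≠ cmax σ (PsiF σ m) := by
    intro hc
    have hle := hmax _ (sameCycle_of_cmax_eq hc).symm
    rw [keyF, keyF, hc] at hkey
    omega
  by_contra hne
  have hkz : 0 < kval σ (PsiF σ ⟨m.val + 1, h⟩) :=
    Nat.pos_of_ne_zero (fun h0 => hne (kval_eq_zero_iff.mp h0))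
  have hwq : PsiF σ ((PsiF σ).symm (cmax σ (PsiF σ ⟨m.val + 1, h⟩))) =
      cmax σ (PsiF σ ⟨m.val + 1, h⟩) := by simp
  have hkeyC : keyF σ (cmax σ (PsiF σ ⟨m.val + 1, h⟩)) =
      (cmax σ (PsiF σ ⟨m.val + 1, h⟩)).val * n := by
    rw [keyF, cmax_cmax, kval_cmax]
    omega
  have hqlt : (PsiF σ).symm (cmax σ (PsiF σ ⟨m.val + 1, h⟩)) < ⟨m.val + 1, h⟩ := by
    apply psiF_pos_lt
    rw [hwq, hkeyC, keyF]
    omega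
  have hqm : (PsiF σ).symm (cmax σ (PsiF σ ⟨m.val + 1, h⟩)) ≤ m :=
    Fin.le_def.mpr (by
      have := Fin.lt_def.mp hqlt
      simp only [] at this
      omega)
  have hkle : keyF σ (cmax σ (PsiF σ ⟨m.val + 1, h⟩)) ≤ keyF σ (PsiF σ m) := by
    rcases eq_or_lt_of_le hqm with he | hlt
    · rw [← hwq, he]
    · rw [← hwq]
      exact (psiF_key_lt hlt).le
  have hkvm := kval_lt_n σ (PsiF σ m)
  have hkvz := kval_lt_n σ (PsiF σ ⟨m.val + 1, h⟩)
  rw [hkeyC, keyF] at hkle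
  rw [keyF, keyF] at hkey
  have h1 : (cmax σ (PsiF σ ⟨m.val + 1, h⟩)).val ≤ (cmax σ (PsiF σ m)).val := by
    by_contra hc
    push_neg at hc
    exact absurd (arith_lt hkvm hc : (cmax σ (PsiF σ m)).val * n + kval σ (PsiF σ m) <
      (cmax σ (PsiF σ ⟨m.val + 1, h⟩)).val * n + 0) (by omega)
  have h2 : (cmax σ (PsiF σ m)).val < (cmax σ (PsiF σ ⟨m.val + 1, h⟩)).val := by
    rcases lt_or_ge ((cmax σ (PsiF σ m)).val) ((cmax σ (PsiF σ ⟨m.val + 1, h⟩)).val) with hlt | hle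
    · exact hlt
    · exfalso
      rcases eq_or_lt_of_le hle with he | hlt2
      · exact hcne (Fin.ext he)
      · exact absurd (arith_lt hkvz hlt2 :
          (cmax σ (PsiF σ ⟨m.val + 1, h⟩)).val * n + kval σ (PsiF σ ⟨m.val + 1, h⟩) <
          (cmax σ (PsiF σ m)).val * n + 0) (by omega)
  omega

end Stmt11
namespace Stmt11

set_option maxRecDepth 8000

variable {n : ℕ} {σ : Equiv.Perm (Fin n)}

lemma PhiF_PsiF (σ : Equiv.Perm (Fin n)) : PhiF (PsiF σ) = σ := by
  apply Equiv.ext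
  intro x
  obtain ⟨p, rfl⟩ : ∃ p, PsiF σ p = x := ⟨(PsiF σ).symm x, by simp⟩
  rw [PhiF_apply, Equiv.symm_apply_apply]
  by_cases hl : isLR (PsiF σ) p
  · rw [rmap, if_pos hl]
    have hmax := psiF_isLR_iff.mp hl
    by_cases hfix : σ (PsiF σ p) = PsiF σ p
    · have hseg : segEnd (PsiF σ) p = p := by
        refine le_antisymm ?_ (le_segEnd p)
        by_contra hc
        push_neg at hc
        have hn : p.val + 1 < n := by
          have h1 := Fin.lt_def.mp hc
          have h2 := (segEnd (PsiF σ) p).isLt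
          omega
        have hnl : ¬ isLR (PsiF σ) ⟨p.val + 1, hn⟩ :=
          segEnd_prop (p := p) (q := ⟨p.val + 1, hn⟩) (Fin.lt_def.mpr (by simp only []; omega))
            (Fin.le_def.mpr (by
              have := Fin.lt_def.mp hc
              simp only []
              omega))
        refine hnl (psiF_next_max (fun v hv => ?_) hn)
        have hveq : v = PsiF σ p := by
          obtain ⟨i, hi⟩ := hv
          rw [← hi, Equiv.Perm.zpow_apply_eq_self_of_apply_eq_self hfix]
        rw [hveq]
      rw [hseg, hfix]
    · have hy : cmax σ (σ (PsiF σ p)) = PsiF σ p := by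
        rw [cmax_apply, ← hmax]
      have hinv : σ⁻¹ (σ (PsiF σ p)) = cmax σ (σ (PsiF σ p)) := by
        rw [hy]
        simp
      have hyne : σ (PsiF σ p) ≠ cmax σ (σ (PsiF σ p)) := by
        rw [hy]; exact hfix
      have hky : 0 < kval σ (σ (PsiF σ p)) :=
        Nat.pos_of_ne_zero (fun h0 => hyne (kval_eq_zero_iff.mp h0))
      have hkx : kval σ (PsiF σ p) = 0 := kval_eq_zero_iff.mpr hmax
      have hwm : PsiF σ ((PsiF σ).symm (σ (PsiF σ p))) = σ (PsiF σ p) := by simp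
      have hpm : p < (PsiF σ).symm (σ (PsiF σ p)) := by
        apply psiF_pos_lt
        rw [hwm, keyF, keyF, hy, ← hmax, hkx]
        omega
      have hmaxk : ∀ v, σ.SameCycle (σ (PsiF σ p)) v →
          kval σ v ≤ kval σ (σ (PsiF σ p)) :=
        fun v hv => kval_le_of_inv_cmax hinv hv
      have hseg : segEnd (PsiF σ) p = (PsiF σ).symm (σ (PsiF σ p)) := by
        refine le_antisymm ?_ ?_
        · by_contra hc
          push_neg at hc
          have hn : ((PsiF σ).symm (σ (PsiF σ p))).val + 1 < n := by
            have h1 := Fin.lt_def.mp hc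
            have h2 := (segEnd (PsiF σ) p).isLt
            omega
          have hnl : ¬ isLR (PsiF σ) ⟨((PsiF σ).symm (σ (PsiF σ p))).val + 1, hn⟩ :=
            segEnd_prop (p := p) (q := ⟨((PsiF σ).symm (σ (PsiF σ p))).val + 1, hn⟩)
              (Fin.lt_def.mpr (by
                have := Fin.lt_def.mp hpm
                simp only []
                omega))
              (Fin.le_def.mpr (by
                have := Fin.lt_def.mp hc
                simp only []
                omega))
          refine hnl (psiF_next_max (fun v hv => ?_) hn)
          rw [hwm] at hv ⊢
          exact hmaxk v hv
        · refine mem_segEndSet hpm.le (fun r h1 h2 => ?_)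
          intro hlr
          have hrmax := psiF_isLR_iff.mp hlr
          have hk1 := psiF_key_lt (σ := σ) h1
          have hk2 : keyF σ (PsiF σ r) ≤ keyF σ (σ (PsiF σ p)) := by
            rcases eq_or_lt_of_le h2 with he | hlt
            · rw [he, hwm]
            · rw [← hwm]
              exact (psiF_key_lt hlt).le
          rw [keyF, keyF, ← hmax, hkx] at hk1
          rw [keyF, keyF, hy] at hk2
          have hbr := kval_lt_n σ (PsiF σ r)
          have hby := kval_lt_n σ (σ (PsiF σ p))
          have hceq : (cmax σ (PsiF σ r)).val = (PsiF σ p).val :=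
            arith_between hbr (by omega) hk2 hby
          have hre : PsiF σ r = PsiF σ p := by
            rw [hrmax]
            exact Fin.ext hceq
          have : r = p := (PsiF σ).injective hre
          rw [this] at h1
          exact absurd h1 (lt_irrefl _)
      rw [hseg, hwm]

  · rw [rmap, if_neg hl]
    have h := psiF_prev (σ := σ) (p := p) (fun hc => hl (psiF_isLR_iff.mpr hc))
    exact h.2.symm

end Stmt11
namespace Stmt11

set_option maxRecDepth 8000

variable {n : ℕ} {π' : Equiv.Perm (Fin n)}

noncomputable def segHead (π' : Equiv.Perm (Fin n)) (q : Fin n) : Fin n :=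
  (Finset.univ.filter fun h => h ≤ q ∧ isLR π' h).max'
    ⟨⟨0, q.pos⟩, Finset.mem_filter.mpr ⟨Finset.mem_univ _,
      Fin.le_def.mpr (by simp), isLR_zero rfl⟩⟩

lemma segHead_le (q : Fin n) : segHead π' q ≤ q := by
  have := Finset.max'_mem (Finset.univ.filter fun h => h ≤ q ∧ isLR π' h)
    ⟨⟨0, q.pos⟩, Finset.mem_filter.mpr ⟨Finset.mem_univ _,
      Fin.le_def.mpr (by simp), isLR_zero rfl⟩⟩
  exact (Finset.mem_filter.mp this).2.1

lemma isLR_segHead (q : Fin n) : isLR π' (segHead π' q) := by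
  have := Finset.max'_mem (Finset.univ.filter fun h => h ≤ q ∧ isLR π' h)
    ⟨⟨0, q.pos⟩, Finset.mem_filter.mpr ⟨Finset.mem_univ _,
      Fin.le_def.mpr (by simp), isLR_zero rfl⟩⟩
  exact (Finset.mem_filter.mp this).2.2

lemma le_segHead {h q : Fin n} (h1 : h ≤ q) (h2 : isLR π' h) : h ≤ segHead π' q :=
  Finset.le_max' _ h (Finset.mem_filter.mpr ⟨Finset.mem_univ _, h1, h2⟩)

lemma segHead_prop {q r : Fin n} (h1 : segHead π' q < r) (h2 : r ≤ q) : ¬ isLR π' r :=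
  fun hc => absurd (le_segHead h2 hc) (not_le.mpr h1)

lemma segHead_congr {q r : Fin n} (h1 : segHead π' q ≤ r) (h2 : r ≤ q) :
    segHead π' r = segHead π' q := by
  refine le_antisymm ?_ ?_
  · exact le_segHead ((segHead_le r).trans h2) (isLR_segHead r)
  · exact le_segHead h1 (isLR_segHead q)

lemma isLR_iff_segHead {q : Fin n} : isLR π' q ↔ segHead π' q = q :=
  ⟨fun h => le_antisymm (segHead_le q) (le_segHead le_rfl h),
   fun h => h ▸ isLR_segHead q⟩

lemma le_segEnd_segHead (q : Fin n) : q ≤ segEnd π' (segHead π' q) :=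
  mem_segEndSet (segHead_le q) (fun r hr hr' => segHead_prop hr hr')

lemma phiF_step_notLR {q : Fin n} (hq : ¬ isLR π' q) :
    PhiF π' (π' q) = π' ⟨q.val - 1, Nat.lt_of_le_of_lt (Nat.sub_le _ _) q.isLt⟩ := by
  rw [PhiF_apply, Equiv.symm_apply_apply, rmap, if_neg hq]

lemma phiF_step_LR {q : Fin n} (hq : isLR π' q) :
    PhiF π' (π' q) = π' (segEnd π' q) := by
  rw [PhiF_apply, Equiv.symm_apply_apply, rmap, if_pos hq]

lemma phiF_pow : ∀ (j : ℕ) (q : Fin n), (segHead π' q).val + j ≤ q.val →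
    ((PhiF π') ^ j) (π' q) = π' ⟨q.val - j, Nat.lt_of_le_of_lt (Nat.sub_le _ _) q.isLt⟩ := by
  intro j
  induction j with
  | zero =>
    intro q _
    simp only [pow_zero, Equiv.Perm.coe_one, id_eq]
    exact congrArg π' (Fin.ext (Nat.sub_zero _).symm)
  | succ j ih =>
    intro q hq
    have hlt : segHead π' q < q := Fin.lt_def.mpr (by omega)
    have hnl : ¬ isLR π' q := segHead_prop hlt le_rfl
    have hstep := phiF_step_notLR hnl
    have hq0 : 0 < q.val := not_isLR_pos hnl
    have hhd : segHead π' (⟨q.val - 1, Nat.lt_of_le_of_lt (Nat.sub_le _ _) q.isLt⟩ : Fin n) =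
        segHead π' q :=
      segHead_congr (Fin.le_def.mpr (by simp only []; omega))
        (Fin.le_def.mpr (by simp only []; omega))
    have := ih (⟨q.val - 1, Nat.lt_of_le_of_lt (Nat.sub_le _ _) q.isLt⟩ : Fin n)
      (by rw [hhd]; simp only []; omega)
    rw [pow_succ, Equiv.Perm.mul_apply, hstep, this]
    congr 1
    exact Fin.ext (by simp only []; omega)

lemma phiF_orbit : ∀ (j : ℕ) (q : Fin n), ∃ r : Fin n,
    segHead π' q ≤ r ∧ r ≤ segEnd π' (segHead π' q) ∧ ((PhiF π') ^ j) (π' q) = π' r := by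
  intro j
  induction j with
  | zero =>
    intro q
    exact ⟨q, segHead_le q, le_segEnd_segHead q, by simp⟩
  | succ j ih =>
    intro q
    obtain ⟨r, hr1, hr2, hr3⟩ := ih q
    rw [pow_succ', Equiv.Perm.mul_apply, hr3]
    by_cases hlr : isLR π' r
    · have hrh : r = segHead π' q := by
        rcases eq_or_lt_of_le hr1 with he | hlt
        · exact he.symm
        · exact absurd hlr (segEnd_prop hlt hr2)
      rw [hrh, phiF_step_LR (isLR_segHead q)]
      exact ⟨segEnd π' (segHead π' q), (segHead_le q).trans (le_segEnd_segHead q),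
        le_refl _, rfl⟩
    · have hr0 : 0 < r.val := not_isLR_pos hlr
      have hrh : segHead π' q < r := by
        rcases eq_or_lt_of_le hr1 with he | hlt
        · exact absurd (he ▸ isLR_segHead q) hlr
        · exact hlt
      rw [phiF_step_notLR hlr]
      refine ⟨⟨r.val - 1, Nat.lt_of_le_of_lt (Nat.sub_le _ _) r.isLt⟩, ?_, ?_, rfl⟩
      · exact Fin.le_def.mpr (by
          have := Fin.lt_def.mp hrh
          simp only []
          omega)
      · exact le_trans (Fin.le_def.mpr (by simp only []; omega)) hr2

lemma phiF_cmax (q : Fin n) : cmax (PhiF π') (π' q) = π' (segHead π' q) := by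
  refine le_antisymm ?_ ?_
  · obtain ⟨j, _, hj⟩ := (cmax_sameCycle (PhiF π') (π' q)).exists_pow_eq'
    obtain ⟨r, hr1, hr2, hr3⟩ := phiF_orbit j q
    rw [hj] at hr3
    rw [hr3]
    exact lr_seg_le (isLR_segHead q) hr1 (fun s hs1 hs2 => segEnd_prop hs1 (hs2.trans hr2))
  · refine le_cmax_of_sameCycle ?_
    refine ⟨((q.val - (segHead π' q).val : ℕ) : ℤ), ?_⟩
    rw [zpow_natCast]
    rw [phiF_pow (q.val - (segHead π' q).val) q (by
      have := Fin.le_def.mp (segHead_le (π' := π') q)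
      omega)]
    congr 1
    exact Fin.ext (by
      have := Fin.le_def.mp (segHead_le (π' := π') q)
      simp only []
      omega)

lemma phiF_kval (q : Fin n) : kval (PhiF π') (π' q) = q.val - (segHead π' q).val := by
  have hle := Fin.le_def.mp (segHead_le (π' := π') q)
  refine le_antisymm ?_ ?_
  · refine Nat.find_le ?_
    rw [phiF_cmax, phiF_pow (q.val - (segHead π' q).val) q (by omega)]
    congr 1
    exact Fin.ext (by simp only []; omega)
  · by_contra hc
    push_neg at hc
    have hspec := kval_spec (PhiF π') (π' q)
    rw [phiF_cmax, phiF_pow (kval (PhiF π') (π' q)) q (by omega)] at hspec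
    have := π'.injective hspec
    have hval := congrArg Fin.val this
    simp only [] at hval
    omega

lemma keyF_phiF_adj {i : Fin n} (h : i.val + 1 < n) :
    keyF (PhiF π') (π' i) < keyF (PhiF π') (π' ⟨i.val + 1, h⟩) := by
  rw [keyF, keyF, phiF_cmax, phiF_cmax, phiF_kval, phiF_kval]
  by_cases hlr : isLR π' ⟨i.val + 1, h⟩
  · have hhd : segHead π' ⟨i.val + 1, h⟩ = ⟨i.val + 1, h⟩ := isLR_iff_segHead.mp hlr
    rw [hhd]
    have hlt : π' (segHead π' i) < π' ⟨i.val + 1, h⟩ := by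
      refine hlr (segHead π' i) (Fin.lt_def.mpr ?_)
      have := Fin.le_def.mp (segHead_le (π' := π') i)
      simp only []
      omega
    have hb : i.val - (segHead π' i).val < n := by
      have := i.isLt
      omega
    have hmul := arith_lt (m := n) (a := (π' (segHead π' i)).val)
      (c := (π' ⟨i.val + 1, h⟩).val) (d := (⟨i.val + 1, h⟩ : Fin n).val -
        (⟨i.val + 1, h⟩ : Fin n).val) hb (Fin.lt_def.mp hlt)
    simp only [] at hmul ⊢
    omega
  · have hne : segHead π' ⟨i.val + 1, h⟩ ≠ ⟨i.val + 1, h⟩ :=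
      fun hc => hlr (isLR_iff_segHead.mpr hc)
    have hle : (segHead π' ⟨i.val + 1, h⟩).val ≤ i.val := by
      have h1 := Fin.le_def.mp (segHead_le (π' := π') ⟨i.val + 1, h⟩)
      simp only [] at h1
      rcases eq_or_lt_of_le h1 with he | hlt
      · exact absurd (Fin.ext he) hne
      · omega
    have hhd : segHead π' i = segHead π' ⟨i.val + 1, h⟩ :=
      segHead_congr (Fin.le_def.mpr (by omega)) (Fin.le_def.mpr (by simp only []; omega))
    rw [← hhd]
    have := Fin.le_def.mp (segHead_le (π' := π') i)
    simp only []
    omega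

lemma keyF_phiF_mono : StrictMono (fun i : Fin n => keyF (PhiF π') (π' i)) := by
  have haux : ∀ d : ℕ, ∀ i j : Fin n, j.val = i.val + d + 1 →
      keyF (PhiF π') (π' i) < keyF (PhiF π') (π' j) := by
    intro d
    induction d with
    | zero =>
      intro i j hj
      have h : i.val + 1 < n := by
        have := j.isLt
        omega
      have hk := keyF_phiF_adj (π' := π') h
      have hje : (⟨i.val + 1, h⟩ : Fin n) = j := Fin.ext (by simp only []; omega)
      rwa [hje] at hk
    | succ d ih =>
      intro i j hj
      have h : i.val + 1 < n := by
        have := j.isLt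
        omega
      have h1 := keyF_phiF_adj (π' := π') h
      have h2 := ih ⟨i.val + 1, h⟩ j (by simp only []; omega)
      exact h1.trans h2
  intro i j hij
  exact haux (j.val - i.val - 1) i j (by
    have := Fin.lt_def.mp hij
    omega)

lemma PsiF_PhiF (π' : Equiv.Perm (Fin n)) : PsiF (PhiF π') = π' := by
  have hsm : StrictMono (fun i : Fin n => keyF (PhiF π') (π' i)) := keyF_phiF_mono
  have heq : π' = Tuple.sort (keyF (PhiF π')) := by
    rw [Tuple.eq_sort_iff]
    refine ⟨hsm.monotone, fun i j hij hkeq => absurd (hsm hij) (by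
      simp only [] at hkeq ⊢
      omega)⟩
  rw [PsiF, ← heq]

end Stmt11
namespace Stmt11

set_option maxRecDepth 8000

variable {n : ℕ} {π π' σ : Equiv.Perm (Fin n)}

lemma RT_unique {x y : Fin n} (hx : x ∈ RT π) (hy : y ∈ RT π)
    (h : runOf π x = runOf π y) : x = y :=
  le_antisymm (mem_RT_iff_forall.mp hy x (h ▸ self_mem_runOf x))
    (mem_RT_iff_forall.mp hx y (h.symm ▸ self_mem_runOf y))

lemma runA
    (hdesc : ∀ (i : ℕ) (h : i + 1 < n), π' ⟨i + 1, h⟩ ∉ RT π ↔ IsDesc π' i)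
    (hfm : ∀ (i : ℕ) (h : i + 1 < n), π' ⟨i + 1, h⟩ ∉ RT π →
      π' ⟨i, Nat.lt_of_succ_lt h⟩ = Fm π (π' ⟨i + 1, h⟩)) :
    ∀ (d : ℕ) (p q : Fin n), q.val = (runStartPos π' p).val + d → q ≤ runEndPos π' p →
      runOf π (π' q) = runOf π (π' (runStartPos π' p)) := by
  intro d
  induction d with
  | zero =>
    intro p q hq _
    exact congrArg (fun z => runOf π (π' z)) (Fin.ext hq)
  | succ d ih =>
    intro p q hq hqe
    have hq1 : 1 ≤ q.val := by omega
    have hqn := q.isLt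
    have hqev := Fin.le_def.mp hqe
    have hdesc' : IsDesc π' (q.val - 1) :=
      (rsp_rep_srl p).2 (q.val - 1) (by omega) (by omega)
    have hco : (⟨q.val - 1 + 1, by omega⟩ : Fin n) = q := Fin.ext (by simp only []; omega)
    have hnot : π' q ∉ RT π := by
      have h1 := (hdesc (q.val - 1) (by omega)).mpr hdesc'
      rwa [hco] at h1
    have hfm' : π' ⟨q.val - 1, by omega⟩ = Fm π (π' q) := by
      have h2 := hfm (q.val - 1) (by omega) (by rw [hco]; exact hnot)
      exact h2.trans (congrArg (fun z => Fm π (π' z)) hco)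
    have hrun1 : runOf π (π' ⟨q.val - 1, by omega⟩) = runOf π (π' q) := by
      rw [hfm']
      exact runOf_eq_of_mem (Fm_mem_runOf hnot)
    have hih := ih p ⟨q.val - 1, by omega⟩ (by simp only []; omega)
      (le_trans (Fin.le_def.mpr (by simp only []; omega)) hqe)
    rw [← hrun1, hih]

lemma runsSet_eq_of_conds
    (h0 : ∀ p : Fin n, p.val = 0 → π' p ∈ RT π)
    (hdesc : ∀ (i : ℕ) (h : i + 1 < n), π' ⟨i + 1, h⟩ ∉ RT π ↔ IsDesc π' i)
    (hfm : ∀ (i : ℕ) (h : i + 1 < n), π' ⟨i + 1, h⟩ ∉ RT π →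
      π' ⟨i, Nat.lt_of_succ_lt h⟩ = Fm π (π' ⟨i + 1, h⟩)) :
    runsSet π' = runsSet π := by
  have hB : ∀ p : Fin n, π' (runStartPos π' p) ∈ RT π := by
    intro p
    rcases Nat.eq_zero_or_pos (runStartPos π' p).val with h0' | hpos
    · exact h0 _ h0'
    · have hss : runStartPos π' (runStartPos π' p) = runStartPos π' p :=
        rsp_eq_of_mem le_rfl ((rsp_le p).trans (le_rep p))
      rcases rsp_eq_self_iff.mp hss with hz | hnd
      · omega
      · by_contra hc
        refine hnd ?_
        refine (hdesc ((runStartPos π' p).val - 1)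
          (by have := (runStartPos π' p).isLt; omega)).mp ?_
        have hco : (⟨(runStartPos π' p).val - 1 + 1,
            by have := (runStartPos π' p).isLt; omega⟩ : Fin n) = runStartPos π' p :=
          Fin.ext (by simp only []; omega)
        rw [hco]
        exact hc
  have hA : ∀ p q : Fin n, runStartPos π' p ≤ q → q ≤ runEndPos π' p →
      runOf π (π' q) = runOf π (π' (runStartPos π' p)) := by
    intro p q h1 h2
    exact runA hdesc hfm (q.val - (runStartPos π' p).val) p q
      (by have := Fin.le_def.mp h1; omega) h2
  have hrOf : ∀ v : Fin n, runOf π' v = runOf π v := by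
    intro v
    ext w
    constructor
    · intro hw
      have hpos := mem_runOf_iff_pos.mp hw
      have h1 := hA (π'.symm v) (π'.symm w) hpos.1 hpos.2
      have h2 := hA (π'.symm v) (π'.symm v) (rsp_le _) (le_rep _)
      simp only [Equiv.apply_symm_apply] at h1 h2
      have h3 : runOf π w = runOf π v := by rw [h1, ← h2]
      rw [← h3]
      exact self_mem_runOf w
    · intro hw
      have h1 := hA (π'.symm w) (π'.symm w) (rsp_le _) (le_rep _)
      have h2 := hA (π'.symm v) (π'.symm v) (rsp_le _) (le_rep _)
      simp only [Equiv.apply_symm_apply] at h1 h2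
      have heads : π' (runStartPos π' (π'.symm w)) = π' (runStartPos π' (π'.symm v)) := by
        refine RT_unique (hB (π'.symm w)) (hB (π'.symm v)) ?_
        rw [← h1, ← h2, runOf_eq_of_mem hw]
      exact mem_runOf_iff.mpr (π'.injective heads)
  unfold runsSet
  congr 1
  funext v
  exact hrOf v

lemma cmax_mem_RT (hfm : ∀ x, x ∉ RT π → σ x = Fm π x) (v : Fin n) :
    cmax σ v ∈ RT π := by
  by_contra hc
  have h1 : σ (cmax σ v) = Fm π (cmax σ v) := hfm _ hc
  have h2 : cmax σ v < Fm π (cmax σ v) := Fm_gt hc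
  have h3 : σ.SameCycle v (σ (cmax σ v)) := (cmax_sameCycle σ v).trans ⟨1, by simp⟩
  have h4 := le_cmax_of_sameCycle h3
  rw [h1] at h4
  exact absurd h2 (not_lt.mpr h4)

lemma cmax_of_fixed {x : Fin n} (hfix : σ x = x) : cmax σ x = x := by
  obtain ⟨i, hi⟩ := cmax_sameCycle σ x
  rw [Equiv.Perm.zpow_apply_eq_self_of_apply_eq_self hfix] at hi
  exact hi.symm

lemma runsSet_PsiF (hfm : ∀ x, x ∉ RT π → σ x = Fm π x)
    (hle : ∀ t, t ∈ RT π → σ t ≤ t) :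
    runsSet (PsiF σ) = runsSet π := by
  have hstep : ∀ (i : ℕ) (h : i + 1 < n),
      (PsiF σ ⟨i + 1, h⟩ ∉ RT π → (IsDesc (PsiF σ) i ∧
        PsiF σ ⟨i, Nat.lt_of_succ_lt h⟩ = Fm π (PsiF σ ⟨i + 1, h⟩))) ∧
      (PsiF σ ⟨i + 1, h⟩ ∈ RT π →
        PsiF σ ⟨i, Nat.lt_of_succ_lt h⟩ < PsiF σ ⟨i + 1, h⟩) := by
    intro i h
    by_cases hmax : PsiF σ ⟨i + 1, h⟩ = cmax σ (PsiF σ ⟨i + 1, h⟩)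
    · have hmem : PsiF σ ⟨i + 1, h⟩ ∈ RT π := by
        rw [hmax]
        exact cmax_mem_RT hfm _
      refine ⟨fun hnot => absurd hmem hnot, fun _ => ?_⟩
      exact psiF_isLR_iff.mpr hmax ⟨i, Nat.lt_of_succ_lt h⟩
        (Fin.lt_def.mpr (by simp only []; omega))
    · obtain ⟨hp0, hprev⟩ := psiF_prev hmax
      have hprev' : σ (PsiF σ ⟨i + 1, h⟩) = PsiF σ ⟨i, Nat.lt_of_succ_lt h⟩ := by
        rw [hprev]
        exact congrArg (PsiF σ) (Fin.ext (by simp only []; omega))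
      constructor
      · intro hnot
        have hfmx := hfm _ hnot
        rw [hfmx] at hprev'
        refine ⟨⟨h, ?_⟩, hprev'.symm⟩
        rw [← hprev']
        exact Fm_gt hnot
      · intro hmem
        have hlex := hle _ hmem
        have hne : σ (PsiF σ ⟨i + 1, h⟩) ≠ PsiF σ ⟨i + 1, h⟩ := by
          intro hfix
          exact hmax (cmax_of_fixed hfix).symm
        rw [hprev'] at hlex hne
        exact lt_of_le_of_ne hlex hne
  apply runsSet_eq_of_conds
  · intro p hp
    rw [psiF_zero_max hp]
    exact cmax_mem_RT hfm _
  · intro i h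
    constructor
    · intro hnot
      exact ((hstep i h).1 hnot).1
    · intro hd
      by_contra hmem
      have hasc := (hstep i h).2 hmem
      obtain ⟨hk, hdlt⟩ := hd
      exact absurd (hasc.trans hdlt) (lt_irrefl _)
  · intro i h hnot
    exact ((hstep i h).1 hnot).2

end Stmt11
namespace Stmt11

set_option maxRecDepth 8000

variable {n : ℕ} {π σ τ : Equiv.Perm (Fin n)}

lemma sigma_mem_RB {f : {x : Fin n // x ∉ RT π} ≃ {x : Fin n // x ∉ RB π}}
    (hσ1 : ∀ x : Fin n, ∀ hx : x ∉ RT π, σ x = (f ⟨x, hx⟩ : Fin n))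
    {x : Fin n} (hx : x ∈ RT π) : σ x ∈ RB π := by
  by_contra hc
  obtain ⟨z, hz⟩ := f.surjective ⟨σ x, hc⟩
  have h1 : σ z.val = σ x := by
    rw [hσ1 z.val z.2, hz]
  exact absurd hx (σ.injective h1 ▸ z.2)

lemma tau_mem_RB (hτ1 : ∀ x, x ∉ RT π → τ x = Fm π x)
    {x : Fin n} (hx : x ∈ RT π) : τ x ∈ RB π := by
  by_contra hc
  obtain ⟨z, hz1, hz2⟩ := Fm_surj hc
  have h1 : τ z = τ x := by rw [hτ1 z hz1, hz2]
  exact absurd hx (τ.injective h1 ▸ hz1)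

/-- Replace the values of `σ` off the run tops by the canonical `Fm`. -/
noncomputable def mixFm (π σ : Equiv.Perm (Fin n)) : Fin n → Fin n :=
  fun x => if x ∈ RT π then σ x else Fm π x

/-- Replace the values of `τ` off the run tops by `f`. -/
noncomputable def mixF (π : Equiv.Perm (Fin n))
    (f : {x : Fin n // x ∉ RT π} ≃ {x : Fin n // x ∉ RB π})
    (τ : Equiv.Perm (Fin n)) : Fin n → Fin n :=
  fun x => if hx : x ∈ RT π then τ x else (f ⟨x, hx⟩ : Fin n)

lemma mixFm_injective {f : {x : Fin n // x ∉ RT π} ≃ {x : Fin n // x ∉ RB π}}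
    (hσ1 : ∀ x : Fin n, ∀ hx : x ∉ RT π, σ x = (f ⟨x, hx⟩ : Fin n)) :
    Function.Injective (mixFm π σ) := by
  intro x y hxy
  unfold mixFm at hxy
  by_cases hx : x ∈ RT π <;> by_cases hy : y ∈ RT π
  · rw [if_pos hx, if_pos hy] at hxy
    exact σ.injective hxy
  · rw [if_pos hx, if_neg hy] at hxy
    exact absurd (hxy ▸ sigma_mem_RB hσ1 hx) (Fm_not_mem_RB hy)
  · rw [if_neg hx, if_pos hy] at hxy
    exact absurd (hxy.symm ▸ sigma_mem_RB hσ1 hy) (Fm_not_mem_RB hx)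
  · rw [if_neg hx, if_neg hy] at hxy
    exact Fm_inj hx hy hxy

lemma mixF_injective {f : {x : Fin n // x ∉ RT π} ≃ {x : Fin n // x ∉ RB π}}
    (hτ1 : ∀ x, x ∉ RT π → τ x = Fm π x) :
    Function.Injective (mixF π f τ) := by
  intro x y hxy
  unfold mixF at hxy
  by_cases hx : x ∈ RT π <;> by_cases hy : y ∈ RT π
  · rw [dif_pos hx, dif_pos hy] at hxy
    exact τ.injective hxy
  · rw [dif_pos hx, dif_neg hy] at hxy
    exact absurd (hxy ▸ tau_mem_RB hτ1 hx) (f ⟨y, hy⟩).2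
  · rw [dif_neg hx, dif_pos hy] at hxy
    exact absurd (hxy.symm ▸ tau_mem_RB hτ1 hy) (f ⟨x, hx⟩).2
  · rw [dif_neg hx, dif_neg hy] at hxy
    have := f.injective (Subtype.ext hxy)
    exact congrArg Subtype.val this

lemma card_SF_eq_card_S (π : Equiv.Perm (Fin n))
    (f : {x : Fin n // x ∉ RT π} ≃ {x : Fin n // x ∉ RB π}) :
    (Finset.univ.filter fun τ : Equiv.Perm (Fin n) =>
      (∀ x, x ∉ RT π → τ x = Fm π x) ∧ ∀ t, t ∈ RT π → τ t ≤ t).card =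
    (Finset.univ.filter fun σ : Equiv.Perm (Fin n) =>
      (∀ x : Fin n, ∀ hx : x ∉ RT π, σ x = (f ⟨x, hx⟩ : Fin n)) ∧
      ∀ i : Fin n, i ∈ RT π → σ i ≤ i).card := by
  refine Finset.card_bij'
    (fun τ hτ => Equiv.ofBijective (mixF π f τ)
      (Finite.injective_iff_bijective.mp (mixF_injective
        ((Finset.mem_filter.mp hτ).2.1))))
    (fun σ hσ => Equiv.ofBijective (mixFm π σ)
      (Finite.injective_iff_bijective.mp (mixFm_injective (f := f)
        ((Finset.mem_filter.mp hσ).2.1))))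
    ?_ ?_ ?_ ?_
  · intro τ hτ
    rw [Finset.mem_filter]
    obtain ⟨-, hτ1, hτ2⟩ := Finset.mem_filter.mp hτ
    refine ⟨Finset.mem_univ _, fun x hx => ?_, fun t ht => ?_⟩
    · show mixF π f τ x = _
      rw [mixF, dif_neg hx]
    · show mixF π f τ t ≤ t
      rw [mixF, dif_pos ht]
      exact hτ2 t ht
  · intro σ hσ
    rw [Finset.mem_filter]
    obtain ⟨-, hσ1, hσ2⟩ := Finset.mem_filter.mp hσ
    refine ⟨Finset.mem_univ _, fun x hx => ?_, fun t ht => ?_⟩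
    · show mixFm π σ x = _
      rw [mixFm, if_neg hx]
    · show mixFm π σ t ≤ t
      rw [mixFm, if_pos ht]
      exact hσ2 t ht
  · intro τ hτ
    obtain ⟨-, hτ1, hτ2⟩ := Finset.mem_filter.mp hτ
    apply Equiv.ext
    intro x
    show mixFm π (Equiv.ofBijective (mixF π f τ) _) x = τ x
    by_cases hx : x ∈ RT π
    · rw [mixFm, if_pos hx]
      show mixF π f τ x = τ x
      rw [mixF, dif_pos hx]
    · rw [mixFm, if_neg hx]
      exact (hτ1 x hx).symm
  · intro σ hσ
    obtain ⟨-, hσ1, hσ2⟩ := Finset.mem_filter.mp hσ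
    apply Equiv.ext
    intro x
    show mixF π f (Equiv.ofBijective (mixFm π σ) _) x = σ x
    by_cases hx : x ∈ RT π
    · rw [mixF, dif_pos hx]
      show mixFm π σ x = σ x
      rw [mixFm, if_pos hx]
    · rw [mixF, dif_neg hx]
      exact (hσ1 x hx).symm

lemma card_P_eq_card_SF (π : Equiv.Perm (Fin n)) :
    (Finset.univ.filter fun π' : Equiv.Perm (Fin n) => runsSet π' = runsSet π).card =
    (Finset.univ.filter fun τ : Equiv.Perm (Fin n) =>
      (∀ x, x ∉ RT π → τ x = Fm π x) ∧ ∀ t, t ∈ RT π → τ t ≤ t).card := by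
  refine Finset.card_bij' (fun π' _ => PhiF π') (fun τ _ => PsiF τ) ?_ ?_ ?_ ?_
  · intro π' hπ'
    rw [Finset.mem_filter]
    have hrs := (Finset.mem_filter.mp hπ').2
    exact ⟨Finset.mem_univ _, fun x hx => PhiF_fm hrs hx, fun t ht => PhiF_le hrs ht⟩
  · intro τ hτ
    rw [Finset.mem_filter]
    obtain ⟨-, hτ1, hτ2⟩ := Finset.mem_filter.mp hτ
    exact ⟨Finset.mem_univ _, runsSet_PsiF hτ1 hτ2⟩
  · intro π' _
    exact PsiF_PhiF π'
  · intro τ _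
    exact PhiF_PsiF τ

end Stmt11

/-- the number of permutations with the same set of runs as `π` equals
the number of permutations agreeing with `χ_e(π)` off the run tops and having weak
deficiencies on the run tops. -/
theorem stmt11 (n : ℕ) (π : Equiv.Perm (Fin n))
    (f : {x : Fin n // x ∉ RT π} ≃ {x : Fin n // x ∉ RB π}) (hf : IsChiE π f) :
    (Finset.univ.filter fun π' : Equiv.Perm (Fin n) => runsSet π' = runsSet π).card =
    (Finset.univ.filter fun σ : Equiv.Perm (Fin n) =>
      (∀ x : Fin n, ∀ hx : x ∉ RT π, σ x = (f ⟨x, hx⟩ : Fin n)) ∧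
      ∀ i : Fin n, i ∈ RT π → σ i ≤ i).card := by
  exact (Stmt11.card_P_eq_card_SF π).trans (Stmt11.card_SF_eq_card_S π f)
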